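/- arXiv:1011.3480 — 5 statements merged into one kernel-verified Lean document; each statement's English description precedes it below -/
import Mathlib

section
/- Let s[1..n] be a string and C its array of previous-occurrence pointers. For all indices 1 ≤ i ≤ j ≤ n, the number of distinct characters occurring in the substring s[i..j] (i.e., the cardinality of the set {s[q] : i ≤ q ≤ j}) equals the cardinality of the set {q : i ≤ q ≤ j and C[q] < i}. -/
/-- `C` is the previous-occurrence array for the string `s[1..n]`:
`C q` is the largest `p < q` (with `p ≥ 1`) such that `s p = s q`, or `0` if none exists. -/
def prevOcc {α : Type*} (n : ℕ) (s : ℕ → α) (C : ℕ → ℕ) : Prop :=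
  ∀ q, 1 ≤ q → q ≤ n →
    (1 ≤ C q ∧ C q < q ∧ s (C q) = s q ∧ ∀ p, C q < p → p < q → s p ≠ s q) ∨
    (C q = 0 ∧ ∀ p, 1 ≤ p → p < q → s p ≠ s q)

theorem stmt_1 {α : Type*} [DecidableEq α] (n : ℕ) (s : ℕ → α) (C : ℕ → ℕ)
    (hC : prevOcc n s C) (i j : ℕ) (hi : 1 ≤ i) (hij : i ≤ j) (hjn : j ≤ n) :
    ((Finset.Icc i j).image s).card =
      ((Finset.Icc i j).filter (fun q => C q < i)).card := by
  classical
  -- key: characters hit by the filtered set are all characters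
  have key : ((Finset.Icc i j).filter (fun q => C q < i)).image s
      = (Finset.Icc i j).image s := by
    apply Finset.Subset.antisymm
    · exact Finset.image_subset_image (Finset.filter_subset _ _)
    · intro a ha
      simp only [Finset.mem_image, Finset.mem_filter, Finset.mem_Icc] at ha ⊢
      obtain ⟨q, ⟨hiq, hqj⟩, hsq⟩ := ha
      set T := (Finset.Icc i j).filter (fun p => s p = a) with hT
      have hqT : q ∈ T := by simp [hT, Finset.mem_Icc, hiq, hqj, hsq]
      have hne : T.Nonempty := ⟨q, hqT⟩
      set q' := T.min' hne with hq'
      have hq'T : q' ∈ T := T.min'_mem hne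
      simp only [hT, Finset.mem_filter, Finset.mem_Icc] at hq'T
      obtain ⟨⟨hiq', hq'j⟩, hsq'⟩ := hq'T
      refine ⟨q', ⟨⟨hiq', hq'j⟩, ?_⟩, hsq'⟩
      rcases hC q' (hi.trans hiq') (hq'j.trans hjn) with
        ⟨h1, h2, h3, _⟩ | ⟨h0, _⟩
      · by_contra hcon
        push_neg at hcon
        have hCT : C q' ∈ T := by
          simp only [hT, Finset.mem_filter, Finset.mem_Icc]
          exact ⟨⟨hcon, (h2.le.trans hq'j)⟩, h3.trans hsq'⟩
        exact absurd (T.min'_le _ hCT) (by omega)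
      · omega
  -- injectivity of s on the filtered set
  have hinj : Set.InjOn s ((Finset.Icc i j).filter (fun q => C q < i)) := by
    intro q1 h1 q2 h2 hs
    simp only [Finset.coe_filter, Set.mem_setOf_eq, Finset.mem_Icc] at h1 h2
    obtain ⟨⟨hi1, hj1⟩, hc1⟩ := h1
    obtain ⟨⟨hi2, hj2⟩, hc2⟩ := h2
    rcases lt_trichotomy q1 q2 with hlt | heq | hgt
    · rcases hC q2 (hi.trans hi2) (hj2.trans hjn) with
        ⟨_, _, _, hmax⟩ | ⟨_, hnone⟩
      · exact absurd hs (hmax q1 (by omega) hlt)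
      · exact absurd hs (hnone q1 (hi.trans hi1) hlt)
    · exact heq
    · rcases hC q1 (hi.trans hi1) (hj1.trans hjn) with
        ⟨_, _, _, hmax⟩ | ⟨_, hnone⟩
      · exact absurd hs.symm (hmax q2 (by omega) hgt)
      · exact absurd hs.symm (hnone q2 (hi.trans hi2) hgt)
  rw [← key, Finset.card_image_of_injOn hinj]
end

section
/- Let s[1..n] be a string with C its array of previous-occurrence pointers, and let σ be the number of distinct characters occurring in s. For any block [l, l+b−1] with 1 ≤ l and l+b−1 ≤ n (b ≥ 1), the cardinality of {q : l ≤ q ≤ l+b−1 and C[q] < l} equals the number of distinct characters occurring in s[l..l+b−1], and in particular is at most min(σ, b). -/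
theorem stmt_2 {α : Type*} [DecidableEq α] (n : ℕ) (s : ℕ → α) (C : ℕ → ℕ)
    (hC : prevOcc n s C) (l b : ℕ) (hl : 1 ≤ l) (hb : 1 ≤ b) (hn : l + b - 1 ≤ n) :
    ((Finset.Icc l (l + b - 1)).filter (fun q => C q < l)).card =
        ((Finset.Icc l (l + b - 1)).image s).card ∧
      ((Finset.Icc l (l + b - 1)).filter (fun q => C q < l)).card ≤
        min (((Finset.Icc 1 n).image s).card) b := by
  set I := Finset.Icc l (l + b - 1) with hI
  set F := I.filter (fun q => C q < l) with hF
  -- members of I satisfy bounds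
  have hmemI : ∀ q ∈ I, l ≤ q ∧ q ≤ l + b - 1 ∧ 1 ≤ q ∧ q ≤ n := by
    intro q hq
    rw [hI, Finset.mem_Icc] at hq
    exact ⟨hq.1, hq.2, le_trans hl hq.1, le_trans hq.2 hn⟩
  -- injectivity of s on F
  have hinj : Set.InjOn s F := by
    intro q1 hq1 q2 hq2 hs
    simp only [Finset.mem_coe] at hq1 hq2
    by_contra hne
    rcases Ne.lt_or_gt hne with h | h
    · rw [Finset.mem_filter] at hq2
      obtain ⟨hq2I, hq2C⟩ := hq2
      obtain ⟨hl1, -, h11, -⟩ := hmemI q1 (by rw [Finset.mem_filter] at hq1; exact hq1.1)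
      obtain ⟨-, -, h21, h2n⟩ := hmemI q2 hq2I
      rcases hC q2 h21 h2n with ⟨-, -, -, hmax⟩ | ⟨-, hnone⟩
      · exact hmax q1 (lt_of_lt_of_le hq2C hl1) h hs
      · exact hnone q1 h11 h hs
    · rw [Finset.mem_filter] at hq1
      obtain ⟨hq1I, hq1C⟩ := hq1
      obtain ⟨hl2, -, h21, -⟩ := hmemI q2 (by rw [Finset.mem_filter] at hq2; exact hq2.1)
      obtain ⟨-, -, h11, h1n⟩ := hmemI q1 hq1I
      rcases hC q1 h11 h1n with ⟨-, -, -, hmax⟩ | ⟨-, hnone⟩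
      · exact hmax q2 (lt_of_lt_of_le hq1C hl2) h hs.symm
      · exact hnone q2 h21 h hs.symm
  -- image of F equals image of I
  have himg : F.image s = I.image s := by
    apply Finset.Subset.antisymm
    · exact Finset.image_subset_image (Finset.filter_subset _ _)
    · intro a ha
      rw [Finset.mem_image] at ha
      obtain ⟨q, hqI, hqs⟩ := ha
      -- take minimal element of I with same char
      set T := I.filter (fun p => s p = s q) with hT
      have hTne : T.Nonempty := ⟨q, by rw [hT, Finset.mem_filter]; exact ⟨hqI, rfl⟩⟩
      set m := T.min' hTne with hm
      have hmT : m ∈ T := T.min'_mem hTne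
      rw [hT, Finset.mem_filter] at hmT
      obtain ⟨hmI, hms⟩ := hmT
      obtain ⟨hlm, hmub, hm1, hmn⟩ := hmemI m hmI
      have hCm : C m < l := by
        by_contra hge
        push_neg at hge
        rcases hC m hm1 hmn with ⟨-, hlt, heq, -⟩ | ⟨h0, -⟩
        · have : C m ∈ T := by
            rw [hT, Finset.mem_filter, hI, Finset.mem_Icc]
            exact ⟨⟨hge, le_trans (le_of_lt hlt) hmub⟩, heq.trans hms⟩
          exact absurd (T.min'_le _ this) (not_le.mpr hlt)
        · omega
      rw [Finset.mem_image]
      refine ⟨m, ?_, hms.trans hqs⟩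
      rw [hF, Finset.mem_filter]
      exact ⟨hmI, hCm⟩
  have hcard : F.card = (I.image s).card := by
    rw [← himg, Finset.card_image_of_injOn hinj]
  refine ⟨hcard, ?_⟩
  rw [hcard]
  refine le_min ?_ ?_
  · apply Finset.card_le_card
    apply Finset.image_subset_image
    intro q hq
    rw [hI, Finset.mem_Icc] at hq
    rw [Finset.mem_Icc]
    omega
  · calc (I.image s).card ≤ I.card := Finset.card_image_le
      _ = b := by rw [hI, Nat.card_Icc]; omega
end

section
/- Let s[1..n] be a string with C its array of previous-occurrence pointers, and let H₀(s) be its 0th-order empirical entropy. Then the sum over all positions q with C[q] ≥ 1 of log₂(q − C[q]) is at most n·H₀(s) + 2n. -/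
/-- The 0th-order empirical entropy `H₀` of the string `s[1..n]`:
`∑_c (n_c/n)·log₂(n/n_c)` over the characters `c` occurring in `s`,
where `n_c` is the number of occurrences of `c` in `s[1..n]`. -/
noncomputable def H0 {α : Type*} [DecidableEq α] (n : ℕ) (s : ℕ → α) : ℝ :=
  ∑ c ∈ (Finset.Icc 1 n).image s,
    (((Finset.Icc 1 n).filter (fun q => s q = c)).card : ℝ) / n *
      Real.logb 2 ((n : ℝ) / ((Finset.Icc 1 n).filter (fun q => s q = c)).card)

open Finset Real

lemma jensen_logb {ι : Type*} (t : Finset ι) (ht : t.Nonempty) (g : ι → ℝ)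
    (hg : ∀ i ∈ t, 1 ≤ g i) :
    ∑ i ∈ t, Real.logb 2 (g i) ≤ t.card * Real.logb 2 ((∑ i ∈ t, g i) / t.card) := by
  have hm : (0:ℝ) < t.card := by exact_mod_cast Finset.card_pos.mpr ht
  have hjen := (strictConcaveOn_log_Ioi.concaveOn).le_map_sum (𝕜 := ℝ) (t := t)
    (w := fun _ => 1 / (t.card : ℝ)) (p := g)
    (fun i _ => by positivity)
    (by rw [Finset.sum_const, nsmul_eq_mul]; field_simp)
    (fun i hi => Set.mem_Ioi.mpr (by linarith [hg i hi]))
  have hsum : ∑ i ∈ t, (1 / (t.card:ℝ)) • g i = (∑ i ∈ t, g i) / t.card := by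
    simp only [smul_eq_mul]
    rw [← Finset.mul_sum]; ring
  have hsum2 : ∑ i ∈ t, (1 / (t.card:ℝ)) • Real.log (g i)
      = (∑ i ∈ t, Real.log (g i)) / t.card := by
    simp only [smul_eq_mul]
    rw [← Finset.mul_sum]; ring
  rw [hsum, hsum2] at hjen
  have hlog2 : (0:ℝ) < Real.log 2 := Real.log_pos one_lt_two
  have key : ∑ i ∈ t, Real.log (g i) ≤ t.card * Real.log ((∑ i ∈ t, g i) / t.card) := by
    rw [div_le_iff₀ hm] at hjen
    linarith [hjen]
  simp only [Real.logb]
  rw [← Finset.sum_div]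
  calc (∑ i ∈ t, Real.log (g i)) / Real.log 2
      ≤ (t.card * Real.log ((∑ i ∈ t, g i) / t.card)) / Real.log 2 := by gcongr
    _ = _ := by ring

lemma arith_bound (m N : ℝ) (hm : 1 ≤ m) (hN : m + 1 ≤ N) :
    m * Real.logb 2 (N / m) ≤ (m + 1) * Real.logb 2 (N / (m + 1)) + 2 * (m + 1) := by
  have hm0 : (0:ℝ) < m := by linarith
  have hm10 : (0:ℝ) < m + 1 := by linarith
  have hN0 : (0:ℝ) < N := by linarith
  have hlog2 : (0.6931471803:ℝ) < Real.log 2 := Real.log_two_gt_d9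
  have hlogN : Real.log (m+1) ≤ Real.log N := Real.log_le_log hm10 hN
  have h1 : Real.log ((m+1)/m) ≤ (m+1)/m - 1 :=
    Real.log_le_sub_one_of_pos (by positivity)
  have hmm : (m+1)/m - 1 = 1/m := by field_simp; ring
  have hsplit : Real.log (m+1) = Real.log ((m+1)/m) + Real.log m := by
    rw [Real.log_div (by linarith) (by linarith)]; ring
  have hmlog : m * Real.log ((m+1)/m) ≤ 1 := by
    rw [hmm] at h1
    calc m * Real.log ((m+1)/m) ≤ m * (1/m) := by nlinarith [h1]
      _ = 1 := by field_simp
  have key : (m+1)*Real.log (m+1) - m*Real.log m ≤ Real.log N + 1 := by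
    have h3 : (m+1)*Real.log (m+1) - m*Real.log m
        = Real.log (m+1) + m * Real.log ((m+1)/m) := by
      rw [hsplit]; ring
    rw [h3]; linarith
  have h2 : (1:ℝ) ≤ 2*(m+1)*Real.log 2 := by nlinarith
  have goal2 : m * (Real.log N - Real.log m)
      ≤ (m+1)*(Real.log N - Real.log (m+1)) + 2*(m+1)*Real.log 2 := by nlinarith [key, h2]
  have hL : (0:ℝ) < Real.log 2 := by linarith
  simp only [Real.logb, Real.log_div (ne_of_gt hN0) (ne_of_gt hm0),
    Real.log_div (ne_of_gt hN0) (ne_of_gt hm10)]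
  calc m * ((Real.log N - Real.log m)/Real.log 2)
      = (m * (Real.log N - Real.log m))/Real.log 2 := by ring
    _ ≤ ((m+1)*(Real.log N - Real.log (m+1)) + 2*(m+1)*Real.log 2)/Real.log 2 := by gcongr
    _ = _ := by field_simp

theorem stmt_5 {α : Type*} [DecidableEq α] (n : ℕ) (hn : 1 ≤ n)
    (s : ℕ → α) (C : ℕ → ℕ) (hC : prevOcc n s C) :
    ∑ q ∈ (Finset.Icc 1 n).filter (fun q => 1 ≤ C q),
        Real.logb 2 ((q : ℝ) - (C q : ℝ)) ≤
      n * H0 n s + 2 * n := by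
  classical
  have hn0 : (0:ℝ) < n := by exact_mod_cast hn
  set A := (Finset.Icc 1 n).image s with hA
  set Q := (Finset.Icc 1 n).filter (fun q => 1 ≤ C q) with hQdef
  have hmaps : ∀ q ∈ Q, s q ∈ A := fun q hq =>
    Finset.mem_image_of_mem s (Finset.mem_filter.mp hq).1
  rw [← Finset.sum_fiberwise_of_maps_to hmaps (fun q => Real.logb 2 ((q:ℝ) - (C q:ℝ)))]
  have hne : (n:ℝ) ≠ 0 := ne_of_gt hn0
  have hcardsum : ∑ c ∈ A, (((Finset.Icc 1 n).filter (fun q => s q = c)).card : ℝ) = n := by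
    have h : n = ∑ c ∈ A, ((Finset.Icc 1 n).filter (fun q => s q = c)).card := by
      have h0 := Finset.card_eq_sum_card_fiberwise
        (f := s) (s := Finset.Icc 1 n) (t := A) (fun x hx => Finset.mem_image_of_mem s hx)
      simpa [Nat.card_Icc] using h0
    exact_mod_cast h.symm
  have hRHS : (n:ℝ) * H0 n s + 2*n = ∑ c ∈ A,
      ((((Finset.Icc 1 n).filter (fun q => s q = c)).card : ℝ)
        * Real.logb 2 ((n : ℝ) / ((Finset.Icc 1 n).filter (fun q => s q = c)).card)
       + 2 * (((Finset.Icc 1 n).filter (fun q => s q = c)).card : ℝ)) := by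
    have h2 : ∑ c ∈ A, (2 * (((Finset.Icc 1 n).filter (fun q => s q = c)).card : ℝ))
        = 2 * n := by rw [← Finset.mul_sum, hcardsum]
    rw [Finset.sum_add_distrib, h2, H0, Finset.mul_sum]
    congr 1
    apply Finset.sum_congr rfl
    intro c hc
    field_simp
  rw [hRHS]
  apply Finset.sum_le_sum
  intro c hc
  -- per-character bound
  set P := (Finset.Icc 1 n).filter (fun q => s q = c) with hPdef
  set T := Q.filter (fun q => s q = c) with hTdef
  have hTmem : ∀ q ∈ T, 1 ≤ q ∧ q ≤ n ∧ s q = c ∧ 1 ≤ C q := by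
    intro q hq
    simp only [hTdef, hQdef, Finset.mem_filter, Finset.mem_Icc] at hq
    exact ⟨hq.1.1.1, hq.1.1.2, hq.2, hq.1.2⟩
  have hbranch : ∀ q ∈ T,
      C q < q ∧ s (C q) = s q ∧ ∀ p, C q < p → p < q → s p ≠ s q := by
    intro q hq
    obtain ⟨h1, h2, _, h4⟩ := hTmem q hq
    rcases hC q h1 h2 with ⟨_, hlt, heq, hmax⟩ | ⟨h0, _⟩
    · exact ⟨hlt, heq, hmax⟩
    · omega
  have hPne : P.Nonempty := by
    obtain ⟨q, hq, hsq⟩ := Finset.mem_image.mp hc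
    exact ⟨q, Finset.mem_filter.mpr ⟨hq, hsq⟩⟩
  set q0 := P.min' hPne with hq0def
  have hq0 : q0 ∈ P := P.min'_mem hPne
  have hq0' : 1 ≤ q0 ∧ q0 ≤ n ∧ s q0 = c := by
    simp only [hPdef, Finset.mem_filter, Finset.mem_Icc] at hq0
    exact ⟨hq0.1.1, hq0.1.2, hq0.2⟩
  have hCq0 : C q0 = 0 := by
    rcases hC q0 hq0'.1 hq0'.2.1 with ⟨h1, hlt, heq, _⟩ | ⟨h0, _⟩
    · exfalso
      have hmem : C q0 ∈ P := by
        simp only [hPdef, Finset.mem_filter, Finset.mem_Icc]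
        exact ⟨⟨h1, by omega⟩, heq.trans hq0'.2.2⟩
      have := P.min'_le _ hmem
      omega
    · exact h0
  have hT : T = P.erase q0 := by
    ext q
    simp only [Finset.mem_erase, hTdef, hQdef, hPdef, Finset.mem_filter, Finset.mem_Icc]
    constructor
    · rintro ⟨⟨hq, hCq⟩, hsq⟩
      refine ⟨?_, hq, hsq⟩
      rintro rfl; omega
    · rintro ⟨hne, hq, hsq⟩
      have hlt : q0 < q := lt_of_le_of_ne (P.min'_le q (Finset.mem_filter.mpr ⟨Finset.mem_Icc.mpr hq, hsq⟩)) (Ne.symm hne)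
      rcases hC q hq.1 hq.2 with ⟨h1, _, _, _⟩ | ⟨_, hnone⟩
      · exact ⟨⟨hq, h1⟩, hsq⟩
      · exact absurd (hq0'.2.2.trans hsq.symm) (hnone q0 hq0'.1 hlt)
  have hk : P.card = T.card + 1 := by
    rw [hT, Finset.card_erase_of_mem hq0]
    have : 1 ≤ P.card := Finset.card_pos.mpr hPne
    omega
  have hkn : P.card ≤ n := by
    calc P.card ≤ (Finset.Icc 1 n).card := Finset.card_filter_le _ _
      _ = n := by simp
  -- disjoint intervals
  have hdisj : ∀ x ∈ T, ∀ y ∈ T, x ≠ y →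
      Disjoint (Finset.Ioc (C x) x) (Finset.Ioc (C y) y) := by
    have key : ∀ x ∈ T, ∀ y ∈ T, x < y → x ≤ C y := by
      intro x hx y hy hxy
      obtain ⟨_, _, hmax⟩ := hbranch y hy
      by_contra hcon
      exact hmax x (by omega) hxy (((hTmem x hx).2.2.1).trans ((hTmem y hy).2.2.1).symm)
    intro x hx y hy hne
    rcases Nat.lt_or_ge x y with h | h
    · have := key x hx y hy h
      rw [Finset.disjoint_left]
      intro z hz hz'
      simp only [Finset.mem_Ioc] at hz hz'
      omega
    · have hyx : y < x := by omega
      have := key y hy x hx hyx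
      rw [Finset.disjoint_left]
      intro z hz hz'
      simp only [Finset.mem_Ioc] at hz hz'
      omega
  have hgap : ∑ q ∈ T, (q - C q) ≤ n := by
    have h1 : ∑ q ∈ T, (q - C q) = ∑ q ∈ T, (Finset.Ioc (C q) q).card := by
      simp [Nat.card_Ioc]
    rw [h1, ← Finset.card_biUnion hdisj]
    calc (T.biUnion fun q => Finset.Ioc (C q) q).card
        ≤ (Finset.Icc 1 n).card := by
          apply Finset.card_le_card
          intro z hz
          obtain ⟨q, hq, hzq⟩ := Finset.mem_biUnion.mp hz
          simp only [Finset.mem_Ioc] at hzq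
          obtain ⟨_, h2, _, h4⟩ := hTmem q hq
          simp only [Finset.mem_Icc]
          omega
      _ = n := by simp
  have hg1 : ∀ q ∈ T, (1:ℝ) ≤ (q:ℝ) - (C q:ℝ) := by
    intro q hq
    have := (hbranch q hq).1
    have h : (C q : ℝ) + 1 ≤ q := by exact_mod_cast Nat.succ_le_of_lt this
    linarith
  have hGsum : ∑ q ∈ T, ((q:ℝ) - (C q:ℝ)) ≤ n := by
    have : ∑ q ∈ T, ((q:ℝ) - (C q:ℝ)) = ((∑ q ∈ T, (q - C q) : ℕ) : ℝ) := by
      push_cast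
      apply Finset.sum_congr rfl
      intro q hq
      have := (hbranch q hq).1
      push_cast [Nat.cast_sub (le_of_lt this)]
      ring
    rw [this]
    exact_mod_cast hgap
  rcases T.eq_empty_or_nonempty with hTe | hTne
  · rw [hTe, Finset.sum_empty]
    have hk1 : (1:ℝ) ≤ (P.card : ℝ) := by exact_mod_cast Finset.card_pos.mpr hPne
    have hkn' : (P.card : ℝ) ≤ n := by exact_mod_cast hkn
    have hlogb : 0 ≤ Real.logb 2 ((n:ℝ) / P.card) := by
      apply Real.logb_nonneg one_lt_two
      rw [le_div_iff₀ (by linarith)]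
      linarith
    have : (0:ℝ) ≤ (P.card:ℝ) * Real.logb 2 ((n:ℝ) / P.card) := by positivity
    linarith
  · have hm1 : (1:ℝ) ≤ (T.card : ℝ) := by exact_mod_cast Finset.card_pos.mpr hTne
    have hm0 : (0:ℝ) < (T.card : ℝ) := by linarith
    have hGm : (T.card : ℝ) ≤ ∑ q ∈ T, ((q:ℝ) - (C q:ℝ)) := by
      calc (T.card : ℝ) = ∑ _q ∈ T, (1:ℝ) := by simp
        _ ≤ _ := Finset.sum_le_sum hg1
    have hjen : ∑ q ∈ T, Real.logb 2 ((q:ℝ) - (C q:ℝ))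
        ≤ (T.card:ℝ) * Real.logb 2 ((∑ q ∈ T, ((q:ℝ) - (C q:ℝ))) / T.card) := by
      simpa using jensen_logb T hTne (fun q => (q:ℝ) - (C q:ℝ)) hg1
    have hmono : (T.card:ℝ) * Real.logb 2 ((∑ q ∈ T, ((q:ℝ) - (C q:ℝ))) / T.card)
        ≤ (T.card:ℝ) * Real.logb 2 ((n:ℝ) / T.card) := by
      apply mul_le_mul_of_nonneg_left _ (by linarith)
      exact Real.logb_le_logb_of_le one_lt_two (div_pos (by linarith) hm0)
        (by gcongr)
    have hk' : (P.card : ℝ) = (T.card : ℝ) + 1 := by exact_mod_cast hk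
    have hkn'' : (T.card : ℝ) + 1 ≤ n := by
      rw [← hk']
      exact_mod_cast hkn
    have harith := arith_bound (T.card : ℝ) (n:ℝ) hm1 hkn''
    calc ∑ q ∈ T, Real.logb 2 ((q:ℝ) - (C q:ℝ))
        ≤ (T.card:ℝ) * Real.logb 2 ((∑ q ∈ T, ((q:ℝ) - (C q:ℝ))) / T.card) := hjen
      _ ≤ (T.card:ℝ) * Real.logb 2 ((n:ℝ) / T.card) := hmono
      _ ≤ ((T.card:ℝ)+1) * Real.logb 2 ((n:ℝ) / ((T.card:ℝ)+1)) + 2*((T.card:ℝ)+1) := harith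
      _ = (P.card:ℝ) * Real.logb 2 ((n:ℝ) / (P.card:ℝ)) + 2*(P.card:ℝ) := by rw [hk']
end

section
/- Let s[1..n] be a string with C its array of previous-occurrence pointers and H₀(s) its 0th-order empirical entropy, and let δ > 0. For integers k ≥ 0 define the block sizes b_k = 2^{⌈(1+δ)^k⌉}. For each position q with C[q] ≥ 1, let β(q) be the smallest block size b_k such that some overlapping block of size b_k contains both positions C[q] and q (such a b_k exists since b_k → ∞). Then ∑_{q : C[q] ≥ 1} log₂ β(q) ≤ (1+δ)·n·H₀(s) + 5(1+δ)·n. -/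
/-- The `k`-th block size: `b_k = 2^⌈(1+δ)^k⌉`. -/
noncomputable def blockSize (δ : ℝ) (k : ℕ) : ℕ := 2 ^ ⌈(1 + δ) ^ k⌉₊

/-- Positions `p ≤ q` lie in a common overlapping block of (even) size `b`,
i.e. there is `m ≥ 0` with `m·b/2 + 1 ≤ p` and `q ≤ m·b/2 + b`. -/
def inCommonBlock (b p q : ℕ) : Prop :=
  ∃ m : ℕ, m * (b / 2) + 1 ≤ p ∧ q ≤ m * (b / 2) + b

lemma inCommonBlock_of_close (h p q : ℕ) (hh : 1 ≤ h) (hp : 1 ≤ p) (hpq : p ≤ q)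
    (hclose : q ≤ p + h) : inCommonBlock (2 * h) p q := by
  have h2 : 2 * h / 2 = h := by omega
  have h3 : (p - 1) / h * h ≤ p - 1 := Nat.div_mul_le_self _ _
  have h4 : p - 1 < (p - 1) / h * h + h := Nat.lt_div_mul_add hh
  set X := (p - 1) / h * h with hX
  refine ⟨(p - 1) / h, ?_, ?_⟩ <;> rw [h2, ← hX] <;> omega

lemma logb_two_pow (M : ℕ) : Real.logb 2 ((2 : ℝ) ^ M) = M := by
  rw [Real.logb_pow, Real.logb_self_eq_one one_lt_two, mul_one]

/-- Per-position bound: log₂ β(q) ≤ (1+δ)·log₂(q − C q) + 2(1+δ). -/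
lemma per_pos {α : Type*} (n : ℕ) (s : ℕ → α) (C : ℕ → ℕ) (hC : prevOcc n s C)
    (δ : ℝ) (hδ : 0 < δ) (β : ℕ → ℕ)
    (hβ : ∀ q, 1 ≤ q → q ≤ n → 1 ≤ C q →
      ∃ k : ℕ, β q = blockSize δ k ∧ inCommonBlock (blockSize δ k) (C q) q ∧
        ∀ k' : ℕ, k' < k → ¬ inCommonBlock (blockSize δ k') (C q) q)
    (q : ℕ) (hq1 : 1 ≤ q) (hqn : q ≤ n) (hCq : 1 ≤ C q) :
    Real.logb 2 ((β q : ℕ) : ℝ) ≤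
      (1 + δ) * Real.logb 2 (((q - C q : ℕ) : ℝ)) + 2 * (1 + δ) := by
  obtain ⟨k, hβk, hin, hmin⟩ := hβ q hq1 hqn hCq
  have hCqlt : C q < q := by
    rcases hC q hq1 hqn with ⟨_, h, _⟩ | ⟨h0, _⟩
    · exact h
    · omega
  have hgap1 : 1 ≤ q - C q := by omega
  have hgapR : (1 : ℝ) ≤ ((q - C q : ℕ) : ℝ) := by exact_mod_cast hgap1
  have hlogg : 0 ≤ Real.logb 2 ((q - C q : ℕ) : ℝ) := Real.logb_nonneg one_lt_two hgapR
  have hδ1 : (1 : ℝ) ≤ 1 + δ := by linarith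
  have hβval : Real.logb 2 ((β q : ℕ) : ℝ) = (⌈(1 + δ) ^ k⌉₊ : ℝ) := by
    rw [hβk]
    show Real.logb 2 ((2 ^ ⌈(1 + δ) ^ k⌉₊ : ℕ) : ℝ) = _
    push_cast
    exact logb_two_pow _
  rw [hβval]
  rcases k with _ | j
  · have h1 : ⌈(1 + δ) ^ 0⌉₊ = 1 := by norm_num
    rw [h1]
    push_cast
    nlinarith
  · have hnot := hmin j (Nat.lt_succ_self j)
    set M := ⌈(1 + δ) ^ j⌉₊ with hM
    have hM1 : 1 ≤ M := Nat.one_le_ceil_iff.mpr (by positivity)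
    have hfar : 2 ^ (M - 1) < q - C q := by
      by_contra hle
      push_neg at hle
      apply hnot
      have hbs : blockSize δ j = 2 * 2 ^ (M - 1) := by
        unfold blockSize
        rw [← hM, ← pow_succ', Nat.sub_add_cancel hM1]
      rw [hbs]
      exact inCommonBlock_of_close (2 ^ (M - 1)) (C q) q Nat.one_le_two_pow hCq
        (le_of_lt hCqlt) (by omega)
    have hg2 : (2 : ℝ) ^ (M - 1) ≤ ((q - C q : ℕ) : ℝ) := by
      exact_mod_cast le_of_lt hfar
    have hlog1 : ((M : ℝ) - 1) ≤ Real.logb 2 ((q - C q : ℕ) : ℝ) := by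
      have e1 : ((M : ℝ) - 1) = ((M - 1 : ℕ) : ℝ) := by
        push_cast [hM1]
        ring
      rw [e1, ← logb_two_pow (M - 1)]
      exact Real.logb_le_logb_of_le one_lt_two (by positivity) hg2
    have hMj : ((1 + δ) ^ j : ℝ) ≤ M := Nat.le_ceil _
    have hceil : (⌈(1 + δ) ^ (j + 1)⌉₊ : ℝ) < (1 + δ) ^ (j + 1) + 1 :=
      Nat.ceil_lt_add_one (by positivity)
    have hpow : ((1 + δ) : ℝ) ^ (j + 1) = (1 + δ) * (1 + δ) ^ j := by ring
    set L := Real.logb 2 ((q - C q : ℕ) : ℝ)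
    have key : (0 : ℝ) ≤ (1 + δ) * (L + 1 - (1 + δ) ^ j) := by
      apply mul_nonneg (by linarith)
      linarith
    nlinarith

/-- Per-character bound on the sum of gap logs. -/
lemma per_char {α : Type*} [DecidableEq α] (n : ℕ) (hn : 1 ≤ n) (s : ℕ → α) (C : ℕ → ℕ)
    (hC : prevOcc n s C) (c : α) (hc : c ∈ (Finset.Icc 1 n).image s) :
    ∑ q ∈ ((Finset.Icc 1 n).filter (fun q => 1 ≤ C q)).filter (fun q => s q = c),
      Real.logb 2 (((q - C q : ℕ) : ℝ)) ≤
    (((Finset.Icc 1 n).filter (fun q => s q = c)).card : ℝ) *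
      Real.logb 2 ((n : ℝ) / ((Finset.Icc 1 n).filter (fun q => s q = c)).card) + 2 := by
  classical
  set T := (Finset.Icc 1 n).filter (fun q => s q = c) with hT
  set Sc := ((Finset.Icc 1 n).filter (fun q => 1 ≤ C q)).filter (fun q => s q = c) with hSc
  obtain ⟨q0', hq0'I, hq0's⟩ := Finset.mem_image.mp hc
  have hTne : T.Nonempty := ⟨q0', by rw [hT]; exact Finset.mem_filter.mpr ⟨hq0'I, hq0's⟩⟩
  set q0 := T.min' hTne with hq0
  have hq0T : q0 ∈ T := T.min'_mem hTne
  have hmemT : ∀ q, q ∈ T ↔ (1 ≤ q ∧ q ≤ n ∧ s q = c) := by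
    intro q
    rw [hT]
    simp only [Finset.mem_filter, Finset.mem_Icc]
    tauto
  have hmemSc : ∀ q, q ∈ Sc ↔ (q ∈ T ∧ 1 ≤ C q) := by
    intro q
    rw [hSc, hT]
    simp only [Finset.mem_filter, Finset.mem_Icc]
    tauto
  have hScT : Sc = T.erase q0 := by
    ext q
    rw [Finset.mem_erase, hmemSc]
    constructor
    · rintro ⟨hqT, hCq⟩
      refine ⟨?_, hqT⟩
      obtain ⟨hq1, hqn, hsq⟩ := (hmemT q).mp hqT
      rcases hC q hq1 hqn with ⟨h1, h2, h3, _⟩ | ⟨h0, _⟩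
      · have hCT : C q ∈ T := (hmemT _).mpr ⟨h1, by omega, by rw [h3, hsq]⟩
        intro he
        have hle := T.min'_le _ hCT
        rw [← hq0, ← he] at hle
        omega
      · omega
    · rintro ⟨hne, hqT⟩
      obtain ⟨hq1, hqn, hsq⟩ := (hmemT q).mp hqT
      refine ⟨hqT, ?_⟩
      have hq0lt : q0 < q := lt_of_le_of_ne (T.min'_le _ hqT) (Ne.symm hne)
      rcases hC q hq1 hqn with ⟨h1, _, _, _⟩ | ⟨h0, h5⟩
      · exact h1
      · exfalso
        obtain ⟨h01, h0n, h0s⟩ := (hmemT q0).mp hq0T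
        exact h5 q0 h01 hq0lt (by rw [h0s, hsq])
  set m := Sc.card with hm
  set nc := T.card with hnc
  have hncpos : 1 ≤ nc := Finset.card_pos.mpr hTne
  have hmnc : m + 1 = nc := by
    rw [hm, hnc, hScT, Finset.card_erase_of_mem hq0T]
    omega
  have hnc_le : nc ≤ n := by
    rw [hnc, hT]
    calc ((Finset.Icc 1 n).filter (fun q => s q = c)).card ≤ (Finset.Icc 1 n).card :=
          Finset.card_filter_le _ _
      _ = n := by simp
  clear_value m nc
  have hfact : ∀ q ∈ Sc, 1 ≤ C q ∧ C q < q ∧ q ≤ n := by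
    intro q hq
    obtain ⟨hqT, hCq⟩ := (hmemSc q).mp hq
    obtain ⟨hq1, hqn, _⟩ := (hmemT q).mp hqT
    rcases hC q hq1 hqn with ⟨_, h2, _, _⟩ | ⟨h0, _⟩ <;> omega
  -- gap sum bound
  have hgapsum : ∑ q ∈ Sc, (q - C q) ≤ n := by
    have key : ∀ a ∈ Sc, ∀ b ∈ Sc, a < b → a ≤ C b := by
      intro a ha b hb hab
      obtain ⟨haT, _⟩ := (hmemSc a).mp ha
      obtain ⟨hbT, hCb⟩ := (hmemSc b).mp hb
      obtain ⟨ha1, han, has⟩ := (hmemT a).mp haT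
      obtain ⟨hb1, hbn, hbs⟩ := (hmemT b).mp hbT
      rcases hC b hb1 hbn with ⟨_, _, _, h4⟩ | ⟨h0, _⟩
      · by_contra hlt
        push_neg at hlt
        exact h4 a hlt hab (by rw [has, hbs])
      · omega
    have hdisj : ∀ q1 ∈ Sc, ∀ q2 ∈ Sc, q1 ≠ q2 →
        Disjoint (Finset.Ioc (C q1) q1) (Finset.Ioc (C q2) q2) := by
      intro q1 h1 q2 h2 hne
      rw [Finset.disjoint_left]
      intro x hx1 hx2
      rw [Finset.mem_Ioc] at hx1 hx2
      rcases lt_or_gt_of_ne hne with h | h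
      · have := key q1 h1 q2 h2 h
        omega
      · have := key q2 h2 q1 h1 h
        omega
    calc ∑ q ∈ Sc, (q - C q) = ∑ q ∈ Sc, (Finset.Ioc (C q) q).card := by
          apply Finset.sum_congr rfl
          intro q _
          rw [Nat.card_Ioc]
      _ = (Sc.biUnion fun q => Finset.Ioc (C q) q).card := (Finset.card_biUnion hdisj).symm
      _ ≤ (Finset.Icc 1 n).card := by
          apply Finset.card_le_card
          intro x hx
          rw [Finset.mem_biUnion] at hx
          obtain ⟨q, hq, hx1⟩ := hx
          rw [Finset.mem_Ioc] at hx1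
          have := hfact q hq
          rw [Finset.mem_Icc]
          omega
      _ = n := by simp
  -- real-number work
  rcases Nat.eq_zero_or_pos m with hm0 | hm1
  · have hempty : Sc = ∅ := Finset.card_eq_zero.mp (by omega)
    rw [hempty, Finset.sum_empty]
    have hncR : (0:ℝ) < (nc:ℝ) := by exact_mod_cast hncpos
    have h1 : (1:ℝ) ≤ (n:ℝ) / (nc:ℝ) := by
      rw [le_div_iff₀ hncR]
      have : (nc:ℝ) ≤ (n:ℝ) := by exact_mod_cast hnc_le
      linarith
    have h2 := Real.logb_nonneg one_lt_two h1
    have h3 : 0 ≤ (nc:ℝ) * Real.logb 2 ((n:ℝ) / (nc:ℝ)) := mul_nonneg (le_of_lt hncR) h2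
    linarith
  · -- main case
    have hmR : (1:ℝ) ≤ (m:ℝ) := by exact_mod_cast hm1
    have hmpos : (0:ℝ) < (m:ℝ) := by linarith
    have hncR : (nc:ℝ) = (m:ℝ) + 1 := by exact_mod_cast hmnc.symm
    have hlog2ne : Real.log 2 ≠ 0 := ne_of_gt (Real.log_pos one_lt_two)
    have hncpos' : (0:ℝ) < (nc:ℝ) := by linarith
    have hncne : (nc:ℝ) ≠ 0 := ne_of_gt (by linarith)
    have hnR : (nc:ℝ) ≤ (n:ℝ) := by exact_mod_cast hnc_le
    have hnpos : (0:ℝ) < (n:ℝ) := by linarith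
    have hlog2 : (0:ℝ) < Real.log 2 := Real.log_pos one_lt_two
    set G : ℝ := ∑ q ∈ Sc, (((q - C q : ℕ) : ℝ)) with hG
    have hgap1R : ∀ q ∈ Sc, (1:ℝ) ≤ ((q - C q : ℕ) : ℝ) := by
      intro q hq
      have := hfact q hq
      have h1 : 1 ≤ q - C q := by omega
      exact_mod_cast h1
    have hGm : (m:ℝ) ≤ G := by
      have h1 := Finset.card_nsmul_le_sum Sc (fun q => ((q - C q : ℕ) : ℝ)) 1 hgap1R
      rw [nsmul_eq_mul, mul_one] at h1
      rw [hG, hm]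
      exact h1
    have hGpos : (0:ℝ) < G := by linarith
    have hGne : G ≠ 0 := ne_of_gt hGpos
    have hmne : (m:ℝ) ≠ 0 := ne_of_gt hmpos
    have hGle : G ≤ (n:ℝ) := by
      have h1 : ((∑ q ∈ Sc, (q - C q) : ℕ) : ℝ) ≤ (n:ℝ) := by exact_mod_cast hgapsum
      rw [Nat.cast_sum] at h1
      exact h1
    clear_value G
    -- Jensen via log x ≤ x - 1
    have step1 : ∑ q ∈ Sc, Real.logb 2 (((q - C q : ℕ) : ℝ)) ≤ (m:ℝ) * Real.logb 2 (G / m) := by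
      have hterm : ∀ q ∈ Sc, Real.logb 2 (((q - C q : ℕ) : ℝ)) ≤
          Real.logb 2 (G / m) + ((((q - C q : ℕ) : ℝ) * m / G - 1) / Real.log 2) := by
        intro q hq
        have hx1 : (1:ℝ) ≤ ((q - C q : ℕ) : ℝ) := hgap1R q hq
        have hxpos : (0:ℝ) < ((q - C q : ℕ) : ℝ) := by linarith
        have hy : (0:ℝ) < ((q - C q : ℕ) : ℝ) * m / G :=
          div_pos (mul_pos hxpos hmpos) hGpos
        have h1 : Real.log (((q - C q : ℕ) : ℝ) * m / G) ≤ ((q - C q : ℕ) : ℝ) * m / G - 1 :=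
          Real.log_le_sub_one_of_pos hy
        have h2 : Real.logb 2 (((q - C q : ℕ) : ℝ)) =
            Real.logb 2 (G / m) + Real.logb 2 (((q - C q : ℕ) : ℝ) * m / G) := by
          rw [← Real.logb_mul (ne_of_gt (div_pos hGpos hmpos)) (ne_of_gt hy)]
          congr 1
          field_simp
        rw [h2]
        have h3 : Real.logb 2 (((q - C q : ℕ) : ℝ) * m / G) ≤
            (((q - C q : ℕ) : ℝ) * m / G - 1) / Real.log 2 := by
          rw [Real.logb]
          gcongr
        linarith
      have hsum := Finset.sum_le_sum hterm
      have hsum2 : ∑ q ∈ Sc, (Real.logb 2 (G / m) +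
          ((((q - C q : ℕ) : ℝ) * m / G - 1) / Real.log 2)) = (m:ℝ) * Real.logb 2 (G / m) := by
        rw [Finset.sum_add_distrib, Finset.sum_const, nsmul_eq_mul]
        have e1 : ∑ q ∈ Sc, ((((q - C q : ℕ) : ℝ) * m / G - 1) / Real.log 2) = 0 := by
          rw [← Finset.sum_div]
          have e2 : ∑ q ∈ Sc, ((((q - C q : ℕ) : ℝ) * m / G - 1)) = 0 := by
            rw [Finset.sum_sub_distrib, Finset.sum_const, nsmul_eq_mul, mul_one]
            have e3 : ∑ q ∈ Sc, (((q - C q : ℕ) : ℝ) * m / G) = G * m / G := by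
              rw [← Finset.sum_div, ← Finset.sum_mul, ← hG]
            rw [e3, mul_comm, mul_div_assoc, div_self hGne, mul_one, ← hm, sub_self]
          rw [e2, zero_div]
        rw [e1, add_zero, ← hm]
      rw [hsum2] at hsum
      exact hsum
    -- G/m ≤ n/m
    have step2 : (m:ℝ) * Real.logb 2 (G / m) ≤ (m:ℝ) * Real.logb 2 ((n:ℝ) / m) := by
      apply mul_le_mul_of_nonneg_left _ (le_of_lt hmpos)
      apply Real.logb_le_logb_of_le one_lt_two (div_pos hGpos hmpos)
      gcongr
    -- m·log(n/m) ≤ nc·log(n/nc) + 2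
    have hnne : (n:ℝ) ≠ 0 := ne_of_gt hnpos
    have hsplit : Real.logb 2 ((n:ℝ) / m) = Real.logb 2 ((n:ℝ) / nc) + Real.logb 2 ((nc:ℝ) / m) := by
      rw [← Real.logb_mul (ne_of_gt (div_pos hnpos hncpos')) (ne_of_gt (div_pos hncpos' hmpos))]
      congr 1
      field_simp
    have hlogN : 0 ≤ Real.logb 2 ((n:ℝ) / nc) := by
      apply Real.logb_nonneg one_lt_two
      rw [le_div_iff₀ hncpos']
      linarith
    have hlognc : Real.logb 2 ((nc:ℝ) / m) ≤ (1 / m) / Real.log 2 := by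
      have h1 : Real.log ((nc:ℝ) / m) ≤ (nc:ℝ) / m - 1 :=
        Real.log_le_sub_one_of_pos (div_pos hncpos' hmpos)
      have h2 : (nc:ℝ) / m - 1 = 1 / m := by
        rw [hncR]
        field_simp
        ring
      rw [h2] at h1
      rw [Real.logb]
      gcongr
    have step3 : (m:ℝ) * Real.logb 2 ((n:ℝ) / m) ≤ (nc:ℝ) * Real.logb 2 ((n:ℝ) / nc) + 2 := by
      rw [hsplit, mul_add]
      have e1 : (m:ℝ) * Real.logb 2 ((n:ℝ) / nc) ≤ (nc:ℝ) * Real.logb 2 ((n:ℝ) / nc) := by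
        apply mul_le_mul_of_nonneg_right _ hlogN
        linarith
      have e2 : (m:ℝ) * Real.logb 2 ((nc:ℝ) / m) ≤ 2 := by
        have h1 : (m:ℝ) * Real.logb 2 ((nc:ℝ) / m) ≤ (m:ℝ) * ((1 / m) / Real.log 2) :=
          mul_le_mul_of_nonneg_left hlognc (le_of_lt hmpos)
        have h2 : (m:ℝ) * ((1 / m) / Real.log 2) = 1 / Real.log 2 := by
          field_simp
        have h3 : (0.6931471803:ℝ) < Real.log 2 := Real.log_two_gt_d9
        have h4 : 1 / Real.log 2 ≤ 2 := by
          rw [div_le_iff₀ hlog2]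
          nlinarith
        linarith [h1, h2.le, h2.ge]
      linarith
    calc ∑ q ∈ Sc, Real.logb 2 (((q - C q : ℕ) : ℝ)) ≤ (m:ℝ) * Real.logb 2 (G / m) := step1
      _ ≤ (m:ℝ) * Real.logb 2 ((n:ℝ) / m) := step2
      _ ≤ (nc:ℝ) * Real.logb 2 ((n:ℝ) / nc) + 2 := step3

theorem stmt_11 {α : Type*} [DecidableEq α] (n : ℕ) (hn : 1 ≤ n)
    (s : ℕ → α) (C : ℕ → ℕ) (hC : prevOcc n s C) (δ : ℝ) (hδ : 0 < δ)
    (β : ℕ → ℕ)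
    (hβ : ∀ q, 1 ≤ q → q ≤ n → 1 ≤ C q →
      ∃ k : ℕ, β q = blockSize δ k ∧ inCommonBlock (blockSize δ k) (C q) q ∧
        ∀ k' : ℕ, k' < k → ¬ inCommonBlock (blockSize δ k') (C q) q) :
    ∑ q ∈ (Finset.Icc 1 n).filter (fun q => 1 ≤ C q), Real.logb 2 (β q : ℝ) ≤
      (1 + δ) * n * H0 n s + 5 * (1 + δ) * n := by
  classical
  set S := (Finset.Icc 1 n).filter (fun q => 1 ≤ C q) with hS
  set chars := (Finset.Icc 1 n).image s with hchars
  have hδ1 : (0 : ℝ) ≤ 1 + δ := by linarith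
  -- Step A: pointwise bound, summed
  have h1 : ∑ q ∈ S, Real.logb 2 ((β q : ℕ) : ℝ) ≤
      (1 + δ) * (∑ q ∈ S, Real.logb 2 (((q - C q : ℕ) : ℝ))) + 2 * (1 + δ) * n := by
    have hb : ∑ q ∈ S, Real.logb 2 ((β q : ℕ) : ℝ) ≤
        ∑ q ∈ S, ((1 + δ) * Real.logb 2 (((q - C q : ℕ) : ℝ)) + 2 * (1 + δ)) := by
      apply Finset.sum_le_sum
      intro q hq
      obtain ⟨hqI, hCq⟩ := Finset.mem_filter.mp hq
      obtain ⟨hq1, hqn⟩ := Finset.mem_Icc.mp hqI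
      exact per_pos n s C hC δ hδ β hβ q hq1 hqn hCq
    rw [Finset.sum_add_distrib, Finset.sum_const, ← Finset.mul_sum] at hb
    have hcard : (S.card : ℝ) ≤ n := by
      have : S.card ≤ (Finset.Icc 1 n).card := Finset.card_filter_le _ _
      have h2 : (Finset.Icc 1 n).card = n := by simp
      exact_mod_cast this.trans_eq h2
    calc ∑ q ∈ S, Real.logb 2 ((β q : ℕ) : ℝ)
        ≤ (1 + δ) * (∑ q ∈ S, Real.logb 2 (((q - C q : ℕ) : ℝ))) + S.card • (2 * (1 + δ)) := hb
      _ ≤ (1 + δ) * (∑ q ∈ S, Real.logb 2 (((q - C q : ℕ) : ℝ))) + 2 * (1 + δ) * n := by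
          rw [nsmul_eq_mul]
          nlinarith
  -- Step B: entropy bound on gap logs
  have h2 : ∑ q ∈ S, Real.logb 2 (((q - C q : ℕ) : ℝ)) ≤ (n : ℝ) * H0 n s + 2 * n := by
    have hmaps : ∀ q ∈ S, s q ∈ chars := by
      intro q hq
      exact Finset.mem_image_of_mem s (Finset.mem_filter.mp hq).1
    rw [← Finset.sum_fiberwise_of_maps_to hmaps]
    have hb : ∑ c ∈ chars, ∑ q ∈ S.filter (fun q => s q = c),
        Real.logb 2 (((q - C q : ℕ) : ℝ)) ≤
        ∑ c ∈ chars, ((((Finset.Icc 1 n).filter (fun q => s q = c)).card : ℝ) *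
          Real.logb 2 ((n : ℝ) / ((Finset.Icc 1 n).filter (fun q => s q = c)).card) + 2) := by
      apply Finset.sum_le_sum
      intro c hc
      exact per_char n hn s C hC c hc
    have hH : (n : ℝ) * H0 n s = ∑ c ∈ chars,
        ((((Finset.Icc 1 n).filter (fun q => s q = c)).card : ℝ) *
          Real.logb 2 ((n : ℝ) / ((Finset.Icc 1 n).filter (fun q => s q = c)).card)) := by
      rw [H0, Finset.mul_sum]
      apply Finset.sum_congr rfl
      intro c _
      have hn0 : (n : ℝ) ≠ 0 := by positivity
      field_simp
    have hcc : (chars.card : ℝ) ≤ n := by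
      have h3 : chars.card ≤ (Finset.Icc 1 n).card := Finset.card_image_le
      have h4 : (Finset.Icc 1 n).card = n := by simp
      exact_mod_cast h3.trans_eq h4
    rw [Finset.sum_add_distrib, Finset.sum_const, nsmul_eq_mul] at hb
    rw [hH]
    linarith
  calc ∑ q ∈ S, Real.logb 2 ((β q : ℕ) : ℝ)
      ≤ (1 + δ) * (∑ q ∈ S, Real.logb 2 (((q - C q : ℕ) : ℝ))) + 2 * (1 + δ) * n := h1
    _ ≤ (1 + δ) * ((n : ℝ) * H0 n s + 2 * n) + 2 * (1 + δ) * n := by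
        apply add_le_add_left
        exact mul_le_mul_of_nonneg_left h2 hδ1
    _ ≤ (1 + δ) * n * H0 n s + 5 * (1 + δ) * n := by
        have : (0 : ℝ) ≤ (1 + δ) * n := by positivity
        nlinarith
end

section
/- Let s[1..n] be a string with previous-occurrence array C, let 1 ≤ j ≤ n, let x = s[j], and let y ≠ x be a character. Let s' be the string equal to s except that s'[j] = y, with previous-occurrence array C'. Define i_x = C[j] (the largest p < j with s[p] = x, or 0), and i_y = the largest p < j with s[p] = y (or 0 if none). Suppose there exist occurrences of x and of y in s strictly after position j, and let k_x = the smallest q > j with s[q] = x and k_y = the smallest q > j with s[q] = y. Then: C'[j] = i_y, C'[k_x] = i_x, C'[k_y] = j, and C'[q] = C[q] for every q ∈ [1,n] with q ∉ {j, k_x, k_y}. -/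
def PO {α : Type*} (s : ℕ → α) (q c : ℕ) : Prop :=
  (1 ≤ c ∧ c < q ∧ s c = s q ∧ ∀ p, c < p → p < q → s p ≠ s q) ∨
  (c = 0 ∧ ∀ p, 1 ≤ p → p < q → s p ≠ s q)

lemma PO_unique {α : Type*} {s : ℕ → α} {q a b : ℕ}
    (ha : PO s q a) (hb : PO s q b) : a = b := by
  rcases ha with ⟨ha1, ha2, ha3, ha4⟩ | ⟨ha0, ha4⟩ <;>
    rcases hb with ⟨hb1, hb2, hb3, hb4⟩ | ⟨hb0, hb4⟩
  · rcases lt_trichotomy a b with h | h | h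
    · exact absurd hb3 (ha4 b h hb2)
    · exact h
    · exact absurd ha3 (hb4 a h ha2)
  · exact absurd ha3 (hb4 a ha1 ha2)
  · exact absurd hb3 (ha4 b hb1 hb2)
  · omega

theorem stmt_13 {α : Type*} (n : ℕ) (s s' : ℕ → α) (C C' : ℕ → ℕ)
    (j : ℕ) (hj1 : 1 ≤ j) (hjn : j ≤ n) (x y : α) (hx : s j = x) (hxy : y ≠ x)
    (hs'j : s' j = y) (hs' : ∀ q, q ≠ j → s' q = s q)
    (hC : prevOcc n s C) (hC' : prevOcc n s' C')
    (i_x : ℕ) (hix : i_x = C j)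
    (i_y : ℕ)
    (hiy : (1 ≤ i_y ∧ i_y < j ∧ s i_y = y ∧ ∀ p, i_y < p → p < j → s p ≠ y) ∨
           (i_y = 0 ∧ ∀ p, 1 ≤ p → p < j → s p ≠ y))
    (k_x : ℕ) (hkx1 : j < k_x) (hkxn : k_x ≤ n) (hkxocc : s k_x = x)
    (hkxmin : ∀ q, j < q → q < k_x → s q ≠ x)
    (k_y : ℕ) (hky1 : j < k_y) (hkyn : k_y ≤ n) (hkyocc : s k_y = y)
    (hkymin : ∀ q, j < q → q < k_y → s q ≠ y) :
    C' j = i_y ∧ C' k_x = i_x ∧ C' k_y = j ∧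
      ∀ q, 1 ≤ q → q ≤ n → q ≠ j → q ≠ k_x → q ≠ k_y → C' q = C q := by
  -- C' j = i_y
  have h1 : C' j = i_y := by
    have hb : PO s' j i_y := by
      rcases hiy with ⟨h1, h2, h3, h4⟩ | ⟨h0, h4⟩
      · left
        refine ⟨h1, h2, ?_, ?_⟩
        · rw [hs' i_y (by omega), hs'j, h3]
        · intro p hp1 hp2
          rw [hs' p (by omega), hs'j]
          exact h4 p hp1 hp2
      · right
        refine ⟨h0, ?_⟩
        intro p hp1 hp2
        rw [hs' p (by omega), hs'j]
        exact h4 p hp1 hp2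
    exact PO_unique (hC' j hj1 hjn) hb
  -- C' k_x = i_x
  have hkxj : k_x ≠ j := by omega
  have h2 : C' k_x = i_x := by
    have hb : PO s' k_x i_x := by
      rcases hC j hj1 hjn with ⟨g1, g2, g3, g4⟩ | ⟨g0, g4⟩
      · left
        refine ⟨by omega, by omega, ?_, ?_⟩
        · rw [hs' i_x (by omega), hs' k_x hkxj, hix, g3, hx, hkxocc]
        · intro p hp1 hp2
          rw [hs' k_x hkxj, hkxocc]
          rcases eq_or_ne p j with rfl | hpj
          · rw [hs'j]; exact hxy
          · rw [hs' p hpj]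
            rcases lt_or_ge p j with h | h
            · intro hc; exact g4 p (by omega) h (by rw [hc, hx])
            · exact hkxmin p (by omega) hp2
      · right
        refine ⟨by omega, ?_⟩
        intro p hp1 hp2
        rw [hs' k_x hkxj, hkxocc]
        rcases eq_or_ne p j with rfl | hpj
        · rw [hs'j]; exact hxy
        · rw [hs' p hpj]
          rcases lt_or_ge p j with h | h
          · intro hc; exact g4 p hp1 h (by rw [hc, hx])
          · exact hkxmin p (by omega) hp2
    exact PO_unique (hC' k_x (by omega) hkxn) hb
  -- C' k_y = j
  have hkyj : k_y ≠ j := by omega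
  have h3 : C' k_y = j := by
    have hb : PO s' k_y j := by
      left
      refine ⟨hj1, hky1, ?_, ?_⟩
      · rw [hs'j, hs' k_y hkyj, hkyocc]
      · intro p hp1 hp2
        rw [hs' k_y hkyj, hkyocc, hs' p (by omega)]
        exact hkymin p hp1 hp2
    exact PO_unique (hC' k_y (by omega) hkyn) hb
  refine ⟨h1, h2, h3, ?_⟩
  intro q hq1 hqn hqj hqkx hqky
  have hb : PO s' q (C q) := by
    rcases hC q hq1 hqn with ⟨g1, g2, g3, g4⟩ | ⟨g0, g4⟩
    · -- C q ≠ j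
      have hCqj : C q ≠ j := by
        intro hc
        have hsq : s q = x := by rw [← hx, ← hc, g3]
        rcases lt_or_ge q k_x with h | h
        · exact hkxmin q (by omega) h hsq
        · exact g4 k_x (by omega) (by omega) (by rw [hkxocc, hsq])
      left
      refine ⟨g1, g2, ?_, ?_⟩
      · rw [hs' (C q) hCqj, hs' q hqj, g3]
      · intro p hp1 hp2
        rw [hs' q hqj]
        rcases eq_or_ne p j with rfl | hpj
        · rw [hs'j]
          intro hc
          have hsq : s q = y := hc.symm
          rcases lt_or_ge q k_y with h | h
          · exact hkymin q (by omega) h hsq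
          · exact g4 k_y (by omega) (by omega) (by rw [hkyocc, hsq])
        · rw [hs' p hpj]; exact g4 p hp1 hp2
    · right
      refine ⟨g0, ?_⟩
      intro p hp1 hp2
      rw [hs' q hqj]
      rcases eq_or_ne p j with rfl | hpj
      · rw [hs'j]
        intro hc
        have hsq : s q = y := hc.symm
        rcases lt_or_ge q k_y with h | h
        · exact hkymin q (by omega) h hsq
        · exact g4 k_y (by omega) (by omega) (by rw [hkyocc, hsq])
      · rw [hs' p hpj]; exact g4 p hp1 hp2
  exact PO_unique (hC' q hq1 hqn) hb
end
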